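/- Let d ≥ 1 and 0 < ε ≤ (d−1)/2, and let Z₁,…,Z_d be independent random variables each uniformly distributed on [0,1]. Let K = min{m ∈ {1,…,d} : Z₁ + ⋯ + Z_m ≥ ε}, with K = d if Z₁ + ⋯ + Z_d < ε. Then E[K] ≥ (⌊3ε⌋ + 1)/2. -/

import Mathlib

open MeasureTheory ProbabilityTheory
open scoped ENNReal

lemma card_filter_val_lt (d m : ℕ) (h : m ≤ d) :
    (Finset.univ.filter fun i : Fin d => i.val < m).card = m := by
  have he : (Finset.univ.filter fun i : Fin d => i.val < m)
      = (Finset.range m).attachFin (fun x hx => lt_of_lt_of_le (Finset.mem_range.mp hx) h) := by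
    ext i
    simp [Finset.mem_attachFin]
  rw [he, Finset.card_attachFin, Finset.card_range]

noncomputable abbrev sparsityNu : Measure ℝ := volume.restrict (Set.Icc (0:ℝ) 1)

lemma sparsityNu_prob : IsProbabilityMeasure sparsityNu := by
  constructor
  simp [Real.volume_Icc]

lemma sparsity_reflect_mp :
    MeasurePreserving (fun x : ℝ => 1 - x) sparsityNu sparsityNu := by
  have h0 : MeasurePreserving (fun x : ℝ => 1 - x) volume volume :=
    Measure.measurePreserving_sub_left volume 1
  have hpre : (fun x : ℝ => 1 - x) ⁻¹' (Set.Icc (0:ℝ) 1) = Set.Icc (0:ℝ) 1 := by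
    ext x
    simp only [Set.mem_preimage, Set.mem_Icc]
    constructor <;> intro hx <;> constructor <;> linarith [hx.1, hx.2]
  have := h0.restrict_preimage (s := Set.Icc (0:ℝ) 1) measurableSet_Icc
  rwa [hpre] at this

lemma sparsity_pi_reflect_mp (d : ℕ) :
    MeasurePreserving (fun (x : Fin d → ℝ) i => 1 - x i)
      (Measure.pi fun _ => sparsityNu) (Measure.pi fun _ => sparsityNu) := by
  haveI : IsProbabilityMeasure sparsityNu := sparsityNu_prob
  refine ⟨measurable_pi_lambda _ fun i => (measurable_const.sub (measurable_pi_apply i)), ?_⟩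
  refine (Measure.pi_eq fun s hs => ?_).symm
  rw [Measure.map_apply
    (measurable_pi_lambda (fun (x : Fin d → ℝ) i => 1 - x i) fun i => (measurable_const.sub (measurable_pi_apply i)))
    (MeasurableSet.univ_pi hs)]
  have hpre : (fun (x : Fin d → ℝ) i => 1 - x i) ⁻¹' (Set.pi Set.univ s)
      = Set.pi Set.univ (fun i => (fun t : ℝ => 1 - t) ⁻¹' s i) := by
    ext x; simp [Set.mem_pi]
  rw [hpre, Measure.pi_pi]
  exact Finset.prod_congr rfl fun i _ =>
    sparsity_reflect_mp.measure_preimage (hs i).nullMeasurableSet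

lemma sparsity_half_le_pi (d m : ℕ) (hm : m ≤ d) :
    (1:ℝ≥0∞) ≤ 2 * (Measure.pi fun _ : Fin d => sparsityNu)
      {x | ∑ i ∈ Finset.univ.filter (fun i : Fin d => i.val < m), x i ≤ (m:ℝ)/2} := by
  haveI : IsProbabilityMeasure sparsityNu := sparsityNu_prob
  set PP := Measure.pi fun _ : Fin d => sparsityNu with hPP
  set T : (Fin d → ℝ) → ℝ := fun x => ∑ i ∈ Finset.univ.filter (fun i : Fin d => i.val < m), x i
    with hT
  have hTmeas : Measurable T := Finset.measurable_sum _ fun i _ => measurable_pi_apply i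
  have hAg : PP {x | (m:ℝ)/2 ≤ T x} = PP {x | T x ≤ (m:ℝ)/2} := by
    have hpre : (fun (x : Fin d → ℝ) i => 1 - x i) ⁻¹' {x | (m:ℝ)/2 ≤ T x}
        = {x | T x ≤ (m:ℝ)/2} := by
      ext x
      have hsum : T (fun i => 1 - x i) = (m:ℝ) - T x := by
        rw [hT]
        simp only
        rw [Finset.sum_sub_distrib, Finset.sum_const, card_filter_val_lt d m hm]
        simp
      simp only [Set.mem_preimage, Set.mem_setOf_eq, hsum]
      constructor <;> intro h <;> linarith
    rw [← hpre]
    exact ((sparsity_pi_reflect_mp d).measure_preimage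
      (hTmeas measurableSet_Ici).nullMeasurableSet).symm
  have hcover : (Set.univ : Set (Fin d → ℝ))
      ⊆ {x | T x ≤ (m:ℝ)/2} ∪ {x | (m:ℝ)/2 ≤ T x} := by
    intro x _
    rcases le_total (T x) ((m:ℝ)/2) with h | h
    · exact Or.inl h
    · exact Or.inr h
  calc (1:ℝ≥0∞) = PP Set.univ := (measure_univ).symm
    _ ≤ PP ({x | T x ≤ (m:ℝ)/2} ∪ {x | (m:ℝ)/2 ≤ T x}) := measure_mono hcover
    _ ≤ PP {x | T x ≤ (m:ℝ)/2} + PP {x | (m:ℝ)/2 ≤ T x} := measure_union_le _ _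
    _ = 2 * PP {x | T x ≤ (m:ℝ)/2} := by rw [hAg, two_mul]

/-- Lower bound of Proposition 4 of the paper: for i.i.d. uniforms `Z₁,…,Z_d` on `[0,1]`,
`0 < ε ≤ (d−1)/2`, and `K = min{m ∈ {1,…,d} : Z₁ + ⋯ + Z_m ≥ ε}` (with `K = d` when
`Z₁ + ⋯ + Z_d < ε`), one has `E[K] ≥ (⌊3ε⌋ + 1)/2`. -/
theorem expected_sparsity_lower_bound
    (d : ℕ) (hd : 1 ≤ d) (ε : ℝ) (hε : 0 < ε) (hεd : ε ≤ ((d : ℝ) - 1) / 2)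
    {Ω : Type*} [MeasurableSpace Ω] (μ : Measure Ω) [IsProbabilityMeasure μ]
    (Z : Fin d → Ω → ℝ) (hZmeas : ∀ i, Measurable (Z i))
    (hZindep : iIndepFun Z μ)
    (hZunif : ∀ i, Measure.map (Z i) μ = volume.restrict (Set.Icc (0:ℝ) 1))
    (S : ℕ → Ω → ℝ)
    (hS : ∀ m ω, S m ω = ∑ i ∈ Finset.univ.filter (fun i : Fin d => i.val < m), Z i ω)
    (K : Ω → ℕ)
    (hK : ∀ ω, K ω = if ε ≤ S d ω then sInf {m : ℕ | 1 ≤ m ∧ m ≤ d ∧ ε ≤ S m ω} else d) :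
    ((⌊3 * ε⌋₊ : ℝ) + 1) / 2 ≤ ∫ ω, (K ω : ℝ) ∂μ := by
  classical
  haveI : IsProbabilityMeasure sparsityNu := sparsityNu_prob
  -- measurability of the partial sums
  have hSmeas : ∀ m, Measurable (S m) := by
    intro m
    have h : S m = fun ω => ∑ i ∈ Finset.univ.filter (fun i : Fin d => i.val < m), Z i ω :=
      funext fun ω => hS m ω
    rw [h]
    exact Finset.measurable_sum _ fun i _ => hZmeas i
  -- a measurable counting representation of K
  set c : Ω → ℕ :=
    fun ω => ∑ m ∈ Finset.range d, if (∀ k ∈ Finset.Icc 1 m, S k ω < ε) then 1 else 0 with hc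
  have hKc : ∀ ω, K ω = if ε ≤ S d ω then c ω else d := by
    intro ω
    rw [hK ω]
    by_cases hω : ε ≤ S d ω
    · simp only [hω, if_true]
      set A := {m : ℕ | 1 ≤ m ∧ m ≤ d ∧ ε ≤ S m ω} with hA
      have hdA : d ∈ A := ⟨hd, le_refl d, hω⟩
      have hne : A.Nonempty := ⟨d, hdA⟩
      obtain ⟨h1a, had, hεa⟩ := Nat.sInf_mem hne
      have hterm : ∀ m ∈ Finset.range d,
          (if (∀ k ∈ Finset.Icc 1 m, S k ω < ε) then (1:ℕ) else 0)
            = if m < sInf A then 1 else 0 := by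
        intro m hmr
        have hmr' : m < d := Finset.mem_range.mp hmr
        by_cases hcond : ∀ k ∈ Finset.Icc 1 m, S k ω < ε
        · rw [if_pos hcond, if_pos ?_]
          by_contra hle
          push_neg at hle
          have : S (sInf A) ω < ε := hcond _ (Finset.mem_Icc.mpr ⟨h1a, hle⟩)
          exact absurd hεa (not_le.mpr this)
        · rw [if_neg hcond, if_neg ?_]
          intro hlt
          refine hcond fun k hk => ?_
          obtain ⟨hk1, hkm⟩ := Finset.mem_Icc.mp hk
          by_contra hnk
          push_neg at hnk
          have hkA : k ∈ A := ⟨hk1, le_of_lt (lt_of_le_of_lt hkm hmr'), hnk⟩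
          exact absurd (Nat.sInf_le hkA) (not_le.mpr (lt_of_le_of_lt hkm hlt))
      rw [hc]
      simp only
      rw [Finset.sum_congr rfl hterm, ← Finset.card_filter]
      have : (Finset.range d).filter (fun m => m < sInf A) = Finset.range (sInf A) := by
        ext m
        simp only [Finset.mem_filter, Finset.mem_range]
        omega
      rw [this, Finset.card_range]
    · simp [hω]
  have hKmeas : Measurable K := by
    have h : K = fun ω => if ε ≤ S d ω then c ω else d := funext hKc
    rw [h]
    refine Measurable.ite (measurableSet_le measurable_const (hSmeas d)) ?_ measurable_const
    refine Finset.measurable_sum _ fun m _ => ?_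
    refine Measurable.ite ?_ measurable_const measurable_const
    have h2 : {ω | ∀ k ∈ Finset.Icc 1 m, S k ω < ε}
        = ⋂ k ∈ Finset.Icc 1 m, {ω | S k ω < ε} := by
      ext ω; simp
    rw [h2]
    exact MeasurableSet.biInter (Finset.Icc 1 m).countable_toSet
      fun k _ => measurableSet_lt (hSmeas k) measurable_const
  have hKd : ∀ ω, K ω ≤ d := by
    intro ω
    rw [hK ω]
    split
    · exact (Nat.sInf_le ⟨hd, le_refl d, ‹_›⟩)
    · exact le_refl d
  have hKint : Integrable (fun ω => (K ω : ℝ)) μ := by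
    refine Integrable.mono' (integrable_const (d:ℝ)) ?_ ?_
    · exact (measurable_from_top.comp hKmeas).aestronglyMeasurable
    · refine Filter.Eventually.of_forall fun ω => ?_
      rw [Real.norm_natCast]
      exact_mod_cast hKd ω
  -- joint law is the product of uniform measures
  set P : Ω → (Fin d → ℝ) := fun ω i => Z i ω with hP
  have hPmeas : Measurable P := measurable_pi_lambda _ fun i => hZmeas i
  have hmap : Measure.map P μ = Measure.pi fun _ : Fin d => sparsityNu := by
    refine (Measure.pi_eq fun s hs => ?_).symm
    rw [Measure.map_apply hPmeas (MeasurableSet.univ_pi hs)]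
    have hpre : P ⁻¹' (Set.pi Set.univ s) = ⋂ i, Z i ⁻¹' s i := by
      ext ω; simp [hP, Set.mem_pi]
    rw [hpre, hZindep.meas_iInter fun i => ⟨s i, hs i, rfl⟩]
    refine Finset.prod_congr rfl fun i _ => ?_
    rw [← Measure.map_apply (hZmeas i) (hs i), hZunif i]
  -- null sets: some coordinate outside [0,1], or first coordinate equal to 1
  set i₀ : Fin d := ⟨0, hd⟩ with hi₀
  set N : Set Ω := (⋃ i, Z i ⁻¹' (Set.Icc (0:ℝ) 1)ᶜ) ∪ Z i₀ ⁻¹' {1} with hN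
  have hN0 : μ N = 0 := by
    rw [hN]
    refine measure_union_null (measure_iUnion_null fun i => ?_) ?_
    · have : μ (Z i ⁻¹' (Set.Icc (0:ℝ) 1)ᶜ)
          = Measure.map (Z i) μ (Set.Icc (0:ℝ) 1)ᶜ := by
        rw [Measure.map_apply (hZmeas i) measurableSet_Icc.compl]
      rw [this, hZunif i, Measure.restrict_apply measurableSet_Icc.compl]
      simp
    · have : μ (Z i₀ ⁻¹' {1}) = Measure.map (Z i₀) μ {1} := by
        rw [Measure.map_apply (hZmeas i₀) (measurableSet_singleton 1)]
      rw [this, hZunif i₀, Measure.restrict_apply (measurableSet_singleton 1)]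
      exact measure_mono_null Set.inter_subset_left (Real.volume_singleton)
  -- if all coordinates are in [0,1] and S m ω < ε with m < d, then K ω > m
  have hKgt : ∀ ω, ω ∉ N → ∀ m, m < d → S m ω < ε → m < K ω := by
    intro ω hω m hmd hSm
    have hZω : ∀ i, Z i ω ∈ Set.Icc (0:ℝ) 1 := by
      intro i
      by_contra hcon
      exact hω (Or.inl (Set.mem_iUnion.mpr ⟨i, hcon⟩))
    rw [hK ω]
    split
    · rename_i hεd'
      set A := {m : ℕ | 1 ≤ m ∧ m ≤ d ∧ ε ≤ S m ω} with hA
      by_contra hle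
      push_neg at hle
      have hne : A.Nonempty := ⟨d, hd, le_refl d, hεd'⟩
      obtain ⟨h1a, had, hεa⟩ := Nat.sInf_mem hne
      have hmono : S (sInf A) ω ≤ S m ω := by
        rw [hS, hS]
        refine Finset.sum_le_sum_of_subset_of_nonneg ?_ ?_
        · intro i hi
          simp only [Finset.mem_filter, Finset.mem_univ, true_and] at hi ⊢
          exact lt_of_lt_of_le hi hle
        · intro i _ _
          exact (hZω i).1
      linarith
    · exact hmd
  -- probability bounds for the tail events
  have hsetmeas : ∀ m : ℕ, MeasurableSet {ω | m < K ω} := by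
    intro m
    exact hKmeas measurableSet_Ioi
  -- case m ≤ ε : probability one
  have hbound1 : ∀ m : ℕ, (m:ℝ) ≤ ε → m < d → (1:ℝ) ≤ (μ {ω | m < K ω}).toReal := by
    intro m hmε hmd
    have hsub : {ω | m < K ω}ᶜ ⊆ N := by
      intro ω hω
      simp only [Set.mem_compl_iff, Set.mem_setOf_eq, not_lt] at hω
      by_contra hωN
      refine absurd hω (not_le.mpr ?_)
      refine hKgt ω hωN m hmd ?_
      -- show S m ω < ε
      have hZω : ∀ i, Z i ω ∈ Set.Icc (0:ℝ) 1 := by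
        intro i
        by_contra hcon
        exact hωN (Or.inl (Set.mem_iUnion.mpr ⟨i, hcon⟩))
      have hZ0 : Z i₀ ω ≠ 1 := by
        intro hcon
        exact hωN (Or.inr hcon)
      rcases Nat.eq_zero_or_pos m with hm0 | hm0
      · rw [hS]
        subst hm0
        simp only [Nat.not_lt_zero, Finset.filter_false]
        simpa using hε
      · have hlt : S m ω < m := by
          rw [hS]
          have := Finset.sum_lt_sum
            (s := Finset.univ.filter fun i : Fin d => i.val < m)
            (f := fun i => Z i ω) (g := fun _ => (1:ℝ))
            (fun i _ => (hZω i).2)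
            ⟨i₀, by simp [hi₀, hm0, Finset.mem_filter], lt_of_le_of_ne (hZω i₀).2 hZ0⟩
          rw [Finset.sum_const, card_filter_val_lt d m (le_of_lt hmd)] at this
          simpa using this
        linarith
    have h1 : μ {ω | m < K ω}ᶜ = 0 := measure_mono_null hsub hN0
    have h2 : (1:ℝ≥0∞) ≤ μ {ω | m < K ω} := by
      calc (1:ℝ≥0∞) = μ Set.univ := measure_univ.symm
        _ = μ ({ω | m < K ω} ∪ {ω | m < K ω}ᶜ) := by rw [Set.union_compl_self]
        _ ≤ μ {ω | m < K ω} + μ {ω | m < K ω}ᶜ := measure_union_le _ _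
        _ = μ {ω | m < K ω} := by rw [h1, add_zero]
    have h3 := ENNReal.toReal_mono (measure_ne_top μ _) h2
    simpa using h3
  -- case m < 2ε : probability at least one half
  have hbound2 : ∀ m : ℕ, (m:ℝ) < 2 * ε → m < d → (1/2 : ℝ) ≤ (μ {ω | m < K ω}).toReal := by
    intro m hm2ε hmd
    set A : Set (Fin d → ℝ) :=
      {x | ∑ i ∈ Finset.univ.filter (fun i : Fin d => i.val < m), x i ≤ (m:ℝ)/2} with hA
    have hAmeas : MeasurableSet A :=
      (Finset.measurable_sum _ fun i _ => measurable_pi_apply i :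
        Measurable fun x : Fin d → ℝ =>
          ∑ i ∈ Finset.univ.filter (fun i : Fin d => i.val < m), x i) measurableSet_Iic
    have hsub : P ⁻¹' A \ N ⊆ {ω | m < K ω} := by
      intro ω hω
      obtain ⟨hωA, hωN⟩ := hω
      refine hKgt ω hωN m hmd ?_
      have : S m ω ≤ (m:ℝ)/2 := by
        rw [hS]
        exact hωA
      linarith
    have hμA : μ (P ⁻¹' A) = (Measure.pi fun _ : Fin d => sparsityNu) A := by
      rw [← hmap, Measure.map_apply hPmeas hAmeas]
    have h1 : (1:ℝ≥0∞) ≤ 2 * μ {ω | m < K ω} := by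
      calc (1:ℝ≥0∞) ≤ 2 * (Measure.pi fun _ : Fin d => sparsityNu) A :=
            sparsity_half_le_pi d m (le_of_lt hmd)
        _ = 2 * μ (P ⁻¹' A \ N) := by rw [measure_diff_null hN0, hμA]
        _ ≤ 2 * μ {ω | m < K ω} := by
            exact mul_le_mul_right (measure_mono hsub) 2
    have h3 := ENNReal.toReal_mono
      (by exact ENNReal.mul_ne_top (by norm_num) (measure_ne_top μ _)) h1
    rw [ENNReal.toReal_mul] at h3
    simp only [ENNReal.toReal_one, ENNReal.toReal_ofNat] at h3
    linarith
  -- set up the truncated sum of indicators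
  set a : ℕ := ⌊ε⌋₊ with ha
  set b : ℕ := ⌈2 * ε⌉₊ with hb
  have hab : a < b := by
    have h1 : (a:ℝ) ≤ ε := Nat.floor_le (le_of_lt hε)
    have h2 : 2 * ε ≤ (b:ℝ) := Nat.le_ceil _
    have : (a:ℝ) < (b:ℝ) := by linarith
    exact_mod_cast this
  have hble : ∀ m : ℕ, m < b → (m:ℝ) < 2 * ε := by
    intro m hm
    have h1 : (m:ℝ) + 1 ≤ (b:ℝ) := by exact_mod_cast hm
    have h2 : (b:ℝ) < 2 * ε + 1 := Nat.ceil_lt_add_one (by linarith)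
    linarith
  have hmd : ∀ m : ℕ, m < b → m < d := by
    intro m hm
    have h1 : (m:ℝ) < 2 * ε := hble m hm
    have h2 : (m:ℝ) < (d:ℝ) := by
      have : (2:ℝ) * ε ≤ (d:ℝ) - 1 := by linarith
      linarith
    exact_mod_cast h2
  set f : Ω → ℝ := fun ω => ∑ m ∈ Finset.range b, ({ω' | m < K ω'}.indicator (fun _ => (1:ℝ))) ω
    with hf
  have hfle : ∀ ω, f ω ≤ (K ω : ℝ) := by
    intro ω
    rw [hf]
    simp only [Set.indicator_apply, Set.mem_setOf_eq, Pi.one_apply]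
    rw [Finset.sum_boole]
    have hsub : (Finset.range b).filter (fun m => m < K ω) ⊆ Finset.range (K ω) := by
      intro m hm
      simp only [Finset.mem_filter, Finset.mem_range] at hm ⊢
      exact hm.2
    have hcard := Finset.card_le_card hsub
    rw [Finset.card_range] at hcard
    exact_mod_cast hcard
  have hfint : Integrable f μ :=
    integrable_finset_sum _ fun m _ => (integrable_const (1:ℝ)).indicator (hsetmeas m)
  have hintf : ∫ ω, f ω ∂μ = ∑ m ∈ Finset.range b, (μ {ω | m < K ω}).toReal := by
    simp only [hf]
    rw [integral_finset_sum _ fun m _ => (integrable_const (1:ℝ)).indicator (hsetmeas m)]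
    exact Finset.sum_congr rfl fun m _ => integral_indicator_one (hsetmeas m)
  -- bound each term from below
  have hterm : ∀ m ∈ Finset.range b,
      (if m ≤ a then (1:ℝ) else 1/2) ≤ (μ {ω | m < K ω}).toReal := by
    intro m hm
    have hmb : m < b := Finset.mem_range.mp hm
    by_cases hma : m ≤ a
    · rw [if_pos hma]
      refine hbound1 m ?_ (hmd m hmb)
      calc (m:ℝ) ≤ (a:ℝ) := by exact_mod_cast hma
        _ ≤ ε := Nat.floor_le (le_of_lt hε)
    · rw [if_neg hma]
      exact hbound2 m (hble m hmb) (hmd m hmb)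
  have hsumg : ((a:ℝ) + b + 1) / 2 = ∑ m ∈ Finset.range b, (if m ≤ a then (1:ℝ) else 1/2) := by
    have hg : ∀ m : ℕ, (if m ≤ a then (1:ℝ) else 1/2) = 1/2 + (if m ≤ a then (1/2:ℝ) else 0) := by
      intro m
      by_cases h : m ≤ a
      · simp [h]; norm_num
      · simp [h]
    rw [Finset.sum_congr rfl fun m _ => hg m, Finset.sum_add_distrib, Finset.sum_const,
      ← Finset.sum_filter]
    have hfe : (Finset.range b).filter (fun m => m ≤ a) = Finset.range (a+1) := by
      ext m
      simp only [Finset.mem_filter, Finset.mem_range]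
      omega
    rw [hfe]
    simp only [Finset.sum_const, Finset.card_range, nsmul_eq_mul]
    push_cast
    ring
  -- final arithmetic
  have hfloor : (⌊3 * ε⌋₊ : ℝ) ≤ (a:ℝ) + b := by
    have h3 : 3 * ε ≤ ε + (b:ℝ) := by
      have := Nat.le_ceil (2 * ε)
      linarith
    have h4 : ⌊3 * ε⌋₊ ≤ ⌊ε + (b:ℝ)⌋₊ := Nat.floor_mono h3
    rw [Nat.floor_add_natCast (le_of_lt hε)] at h4
    exact_mod_cast h4
  calc ((⌊3 * ε⌋₊ : ℝ) + 1) / 2 ≤ ((a:ℝ) + b + 1) / 2 := by linarith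
    _ = ∑ m ∈ Finset.range b, (if m ≤ a then (1:ℝ) else 1/2) := hsumg
    _ ≤ ∑ m ∈ Finset.range b, (μ {ω | m < K ω}).toReal := Finset.sum_le_sum hterm
    _ = ∫ ω, f ω ∂μ := hintf.symm
    _ ≤ ∫ ω, (K ω : ℝ) ∂μ := integral_mono hfint hKint hfle
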